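/- Let S be uniform on {0,1} and A the output of a binary erasure channel with erasure probability 3/4 applied to S. Then Wyner's common information satisfies C(S;A) = H(1/4), where H is the binary entropy function. In particular C(S;A) > I(S;A) = 1/4. -/

import Mathlib

/-- Binary entropy function (base-2 logs). -/
noncomputable def H2 (x : ℝ) : ℝ := -(x * Real.logb 2 x) - (1-x) * Real.logb 2 (1-x)

/-- Output alphabet of the binary erasure channel: 0, e, 1. -/
inductive OutA | o0 | oe | o1
deriving DecidableEq

instance : Fintype OutA where
  elems := {OutA.o0, OutA.oe, OutA.o1}
  complete := by intro x; cases x <;> simp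

/-- Target joint pmf of (S,A): S uniform, A = S w.p. 1/4, A = e w.p. 3/4. -/
noncomputable def jSA : Bool → OutA → ℝ :=
  fun s a =>
    match s, a with
    | _, .oe => 3/8
    | false, .o0 => 1/8
    | true, .o1 => 1/8
    | _, _ => 0

/-- `q` is a joint pmf on S × U × A. -/
def IsJoint {n : ℕ} (q : Bool → Fin n → OutA → ℝ) : Prop :=
  (∀ s u a, 0 ≤ q s u a) ∧ ∑ s : Bool, ∑ u : Fin n, ∑ a : OutA, q s u a = 1

/-- The (S,A)-marginal of `q` is the erasure-channel joint pmf. -/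
def HasMarginal {n : ℕ} (q : Bool → Fin n → OutA → ℝ) : Prop :=
  ∀ s a, (∑ u : Fin n, q s u a) = jSA s a

/-- S and A are conditionally independent given U:
P(s,u,a)·P(u) = P(s,u)·P(u,a). -/
def CondIndep {n : ℕ} (q : Bool → Fin n → OutA → ℝ) : Prop :=
  ∀ s u a, q s u a * (∑ s' : Bool, ∑ a' : OutA, q s' u a') =
    (∑ a' : OutA, q s u a') * (∑ s' : Bool, q s' u a)

/-- Mutual information I((S,A);U) in bits. -/
noncomputable def ISAU {n : ℕ} (q : Bool → Fin n → OutA → ℝ) : ℝ :=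
  ∑ s : Bool, ∑ u : Fin n, ∑ a : OutA,
    q s u a * Real.logb 2 (q s u a /
      ((∑ u' : Fin n, q s u' a) * (∑ s' : Bool, ∑ a' : OutA, q s' u a')))

lemma sum_OutA (f : OutA → ℝ) : ∑ a, f a = f .o0 + f .oe + f .o1 := by
  show Finset.sum _ f = _
  rw [show (Finset.univ : Finset OutA) = {OutA.o0, OutA.oe, OutA.o1} from by decide]
  simp [Finset.sum_insert]; ring

noncomputable def myq : Bool → Fin 3 → OutA → ℝ :=
  fun s u a =>
    match s, u, a with
    | false, 0, .o0 => 1/8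
    | false, 0, .oe => 1/8
    | true, 1, .o1 => 1/8
    | true, 1, .oe => 1/8
    | _, 2, .oe => 1/4
    | _, _, _ => 0

lemma logb4 : Real.logb 2 4 = 2 := by
  rw [show (4:ℝ) = 2*2 by norm_num, Real.logb_mul (by norm_num) (by norm_num)]
  simp [Real.logb_self_eq_one]
  norm_num

lemma logb43 : Real.logb 2 (4/3) = 2 - Real.logb 2 3 := by
  rw [Real.logb_div (by norm_num) (by norm_num), logb4]

lemma H2q : H2 (1/4) = 2 - (3/4) * Real.logb 2 3 := by
  unfold H2
  rw [show (1:ℝ) - 1/4 = 3/4 by norm_num,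
    show (1:ℝ)/4 = 4⁻¹ by norm_num,
    show (3:ℝ)/4 = 3/4 by norm_num,
    Real.logb_inv, Real.logb_div (by norm_num) (by norm_num), logb4]
  ring


/-- Achievability of Wyner's common information C(S;A) = H(1/4) for the erasure
channel joint distribution, and H(1/4) > 1/4 = I(S;A). -/
theorem stmt10 :
    (∃ (n : ℕ) (q : Bool → Fin n → OutA → ℝ),
      IsJoint q ∧ HasMarginal q ∧ CondIndep q ∧ ISAU q = H2 (1/4)) ∧
    H2 (1/4) > 1/4 := by
  constructor
  · refine ⟨3, myq, ⟨fun s u a => ?_, ?_⟩, fun s a => ?_, fun s u a => ?_, ?_⟩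
    · cases s <;> fin_cases u <;> cases a <;> norm_num [myq] <;> split <;> norm_num
    · simp only [Fintype.sum_bool, Fin.sum_univ_three, sum_OutA, myq]
      norm_num
    · cases s <;> cases a <;>
        simp only [Fin.sum_univ_three, jSA, myq] <;> norm_num
    · cases s <;> fin_cases u <;> cases a <;>
        simp only [Fintype.sum_bool, Fin.sum_univ_three, sum_OutA, myq] <;> norm_num
    · unfold ISAU
      simp only [Fintype.sum_bool, Fin.sum_univ_three, sum_OutA, myq]
      norm_num
      rw [H2q, logb4, logb43]
      ring
  · rw [H2q]
    have h3 : Real.logb 2 3 < 7/3 := by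
      rw [Real.logb_lt_iff_lt_rpow (by norm_num) (by norm_num)]
      have e1 : (3:ℝ) = (27:ℝ)^((1:ℝ)/3) := by
        rw [show (27:ℝ) = 3^(3:ℕ) by norm_num, ← Real.rpow_natCast (3:ℝ) 3,
          ← Real.rpow_mul (by norm_num)]
        norm_num
      have e2 : (2:ℝ)^((7:ℝ)/3) = (128:ℝ)^((1:ℝ)/3) := by
        rw [show (128:ℝ) = 2^(7:ℕ) by norm_num, ← Real.rpow_natCast (2:ℝ) 7,
          ← Real.rpow_mul (by norm_num)]
        norm_num
      calc (3:ℝ) = (27:ℝ)^((1:ℝ)/3) := e1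
        _ < (128:ℝ)^((1:ℝ)/3) := Real.rpow_lt_rpow (by norm_num) (by norm_num) (by norm_num)
        _ = (2:ℝ)^((7:ℝ)/3) := e2.symm
    linarith
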